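/- For every choice of (a,b,c) ∈ {0,1}⁴ × {0,1}⁴ × {0,1}⁴, the real symmetric matrix M(a,b,c) has no eigenvalues ≥ 7: every λ ∈ ℂ for which there exists a nonzero vector v ∈ ℂ⁴ with M(a,b,c)·v = λ·v is real and satisfies λ < 7. -/

import Mathlib

noncomputable section

open Matrix

def Mabc (a b c : Fin 4 → ℝ) : Matrix (Fin 4) (Fin 4) ℝ :=
  !![a 2 + a 3 + b 0 + b 1 + c 0 + c 1, a 2 - a 3, c 0 - c 1, b 0 - b 1;
     a 2 - a 3, a 2 + a 3 + b 2 + b 3 + c 2 + c 3, b 2 - b 3, c 2 - c 3;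
     c 0 - c 1, b 2 - b 3, a 0 + a 1 + b 2 + b 3 + c 0 + c 1, a 0 - a 1;
     b 0 - b 1, c 2 - c 3, a 0 - a 1, a 0 + a 1 + b 0 + b 1 + c 2 + c 3]

lemma pair_le {x y : ℝ} (hx : x = 0 ∨ x = 1) (hy : y = 0 ∨ y = 1) :
    x + y + |x - y| ≤ 2 := by
  rcases hx with h | h <;> rcases hy with h' | h' <;> subst h <;> subst h' <;> norm_num

theorem Mabc_no_eigenvalue_ge_seven (a b c : Fin 4 → ℝ)
    (ha : ∀ i, a i = 0 ∨ a i = 1) (hb : ∀ i, b i = 0 ∨ b i = 1)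
    (hc : ∀ i, c i = 0 ∨ c i = 1)
    (lam : ℂ) (v : Fin 4 → ℂ) (hv : v ≠ 0)
    (heig : ((Mabc a b c).map (fun r => (r : ℂ))).mulVec v = lam • v) :
    lam.im = 0 ∧ lam.re < 7 := by
  set A := (Mabc a b c).map (fun r => (r : ℂ)) with hA
  have him : lam.im = 0 := by
    have hsymm : Aᴴ = A := by
      ext i j
      fin_cases i <;> fin_cases j <;>
        simp [hA, Mabc, Matrix.conjTranspose_apply, ← Complex.ofReal_sub]
    have h1 : star v ⬝ᵥ A.mulVec v = lam * (star v ⬝ᵥ v) := by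
      rw [heig, dotProduct_smul, smul_eq_mul]
    have h2 : star (star v ⬝ᵥ A.mulVec v) = star v ⬝ᵥ A.mulVec v := by
      calc star (star v ⬝ᵥ A.mulVec v) = star (A.mulVec v) ⬝ᵥ v := by
            rw [Matrix.star_dotProduct, star_star]
        _ = (Matrix.vecMul (star v) Aᴴ) ⬝ᵥ v := by rw [Matrix.star_mulVec]
        _ = star v ⬝ᵥ A.mulVec v := by rw [hsymm, ← Matrix.dotProduct_mulVec]
    have hn : star v ⬝ᵥ v = ((∑ i, Complex.normSq (v i) : ℝ) : ℂ) := by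
      simp only [dotProduct, Pi.star_apply, Complex.ofReal_sum]
      refine Finset.sum_congr rfl fun i _ => ?_
      rw [Complex.normSq_eq_conj_mul_self]; rfl
    have hnpos : (0 : ℝ) < ∑ i, Complex.normSq (v i) := by
      have : ∃ i, v i ≠ 0 := by
        by_contra h
        push_neg at h
        exact hv (funext fun i => h i)
      obtain ⟨i, hi⟩ := this
      have : 0 < Complex.normSq (v i) := Complex.normSq_pos.mpr hi
      exact Finset.sum_pos' (fun j _ => Complex.normSq_nonneg _)
        ⟨i, Finset.mem_univ i, this⟩
    rw [h1, hn] at h2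
    have h3 : lam.im * (∑ i, Complex.normSq (v i)) = 0 := by
      have := congrArg Complex.im h2
      simp at this
      linarith
    rcases mul_eq_zero.mp h3 with h | h
    · exact h
    · exact absurd h hnpos.ne'
  refine ⟨him, ?_⟩
  have heigv : Module.End.HasEigenvalue (Matrix.toLin' A) lam := by
    refine Module.End.hasEigenvalue_of_hasEigenvector ⟨?_, hv⟩
    rw [Module.End.mem_eigenspace_iff]
    simpa [Matrix.toLin'_apply] using heig
  obtain ⟨k, hk⟩ := eigenvalue_mem_ball heigv
  rw [Metric.mem_closedBall] at hk
  have hre : lam.re - (Mabc a b c k k) ≤ dist lam (A k k) := by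
    have : dist lam (A k k) = ‖lam - (Mabc a b c k k : ℝ)‖ := by
      simp [Complex.dist_eq, hA, Matrix.map_apply]
    rw [this]
    calc lam.re - (Mabc a b c k k) = (lam - (Mabc a b c k k : ℝ)).re := by simp
    _ ≤ ‖lam - (Mabc a b c k k : ℝ)‖ := Complex.re_le_norm _
  have hrad : Mabc a b c k k + (∑ j ∈ Finset.univ.erase k, ‖A k j‖) ≤ 6 := by
    have hnorm : ∀ (x : ℝ), ‖((x:ℂ))‖ = |x| := fun x => by simp
    fin_cases k <;>
      · simp [hA, Mabc, Matrix.map_apply, Fin.sum_univ_four, hnorm]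
        linarith [pair_le (ha 0) (ha 1), pair_le (ha 2) (ha 3), pair_le (hb 0) (hb 1),
          pair_le (hb 2) (hb 3), pair_le (hc 0) (hc 1), pair_le (hc 2) (hc 3)]
  nlinarith [hk, hre, hrad]
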